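/- For pairwise distinct nonzero complex numbers z_0,...,z_n and negative integer N, the divided difference of z ↦ z^N satisfies [z_0,...,z_n] id^N = ((-1)^n / (z_0 ⋯ z_n)) · ∑_{α ∈ ℕ^{n+1}, |α| = |N| - 1} z_0^{-α_0} ⋯ z_n^{-α_n}. -/

import Mathlib

open Finset

/-- Divided differences, defined recursively. -/
noncomputable def divDiff (f : ℂ → ℂ) : (n : ℕ) → (Fin (n + 1) → ℂ) → ℂ
  | 0, x => f (x 0)
  | n + 1, x =>
      (divDiff f n (fun i => x i.castSucc) - divDiff f n (fun i => x i.succ)) /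
        (x 0 - x (Fin.last (n + 1)))


/-- Complete homogeneous sum: `∑_{|α|=m} x^α`. -/
noncomputable def Hsum (k m : ℕ) (x : Fin k → ℂ) : ℂ :=
  ∑ α ∈ Finset.Nat.antidiagonalTuple k m, ∏ j, x j ^ α j

lemma Hsum_zero_right (k : ℕ) (x : Fin k → ℂ) : Hsum k 0 x = 1 := by
  simp [Hsum, Finset.Nat.antidiagonalTuple_zero_right]

lemma Hsum_splitFirst (k m : ℕ) (x : Fin (k + 1) → ℂ) :
    Hsum (k + 1) m x =
      ∑ p ∈ Finset.HasAntidiagonal.antidiagonal m, x 0 ^ p.1 * Hsum k p.2 (x ∘ Fin.succ) := by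
  classical
  have hc : ∀ p ∈ Finset.HasAntidiagonal.antidiagonal m,
      x 0 ^ p.1 * Hsum k p.2 (x ∘ Fin.succ)
        = ∑ β ∈ Finset.Nat.antidiagonalTuple k p.2,
            x 0 ^ p.1 * ∏ j : Fin k, x j.succ ^ β j := by
    intro p _
    rw [Hsum, Finset.mul_sum]
    rfl
  rw [Finset.sum_congr rfl hc]
  refine Eq.trans ?_ (Finset.sum_sigma (Finset.HasAntidiagonal.antidiagonal m)
    (fun p => Finset.Nat.antidiagonalTuple k p.2)
    (fun s => x 0 ^ s.1.1 * ∏ j : Fin k, x j.succ ^ s.2 j))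
  refine Finset.sum_nbij'
    (i := fun α => ⟨(α 0, ∑ j : Fin k, α j.succ), fun j => α j.succ⟩)
    (j := fun s => Fin.cons s.1.1 s.2) ?_ ?_ ?_ ?_ ?_
  · intro α hα
    rw [Finset.Nat.mem_antidiagonalTuple] at hα
    refine Finset.mem_sigma.mpr ⟨?_, ?_⟩
    · rw [Finset.HasAntidiagonal.mem_antidiagonal]
      rw [Fin.sum_univ_succ] at hα
      exact hα
    · exact Finset.Nat.mem_antidiagonalTuple.mpr rfl
  · intro s hs
    rw [Finset.mem_sigma] at hs
    obtain ⟨h1, h2⟩ := hs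
    rw [Finset.HasAntidiagonal.mem_antidiagonal] at h1
    rw [Finset.Nat.mem_antidiagonalTuple] at h2
    rw [Finset.Nat.mem_antidiagonalTuple, Fin.sum_cons, h2, h1]
  · intro α _
    exact Fin.cons_self_tail α
  · intro s hs
    rw [Finset.mem_sigma] at hs
    obtain ⟨h1, h2⟩ := hs
    rw [Finset.HasAntidiagonal.mem_antidiagonal] at h1
    rw [Finset.Nat.mem_antidiagonalTuple] at h2
    rcases s with ⟨⟨a, b⟩, β⟩
    simp only [Fin.cons_zero, Fin.cons_succ]
    congr 1
    simp only at h2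
    simp [h2]
  · intro α _
    rw [Fin.prod_univ_succ]

lemma Hsum_perm (k m : ℕ) (x : Fin k → ℂ) (σ : Equiv.Perm (Fin k)) :
    Hsum k m (x ∘ σ) = Hsum k m x := by
  classical
  unfold Hsum
  refine Finset.sum_nbij' (i := fun α => α ∘ σ.symm) (j := fun α => α ∘ σ) ?_ ?_ ?_ ?_ ?_
  · intro α hα
    rw [Finset.Nat.mem_antidiagonalTuple] at hα ⊢
    rw [← hα]
    exact Equiv.sum_comp σ.symm α
  · intro α hα
    rw [Finset.Nat.mem_antidiagonalTuple] at hα ⊢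
    rw [← hα]
    exact Equiv.sum_comp σ α
  · intro α _; funext j; simp
  · intro α _; funext j; simp
  · intro α _
    rw [← Equiv.prod_comp σ fun j => x j ^ (α ∘ σ.symm) j]
    apply Finset.prod_congr rfl; intro j _; simp

lemma Hsum_succ_first (k m : ℕ) (x : Fin (k + 1) → ℂ) :
    Hsum (k + 1) (m + 1) x = Hsum k (m + 1) (x ∘ Fin.succ) + x 0 * Hsum (k + 1) m x := by
  rw [Hsum_splitFirst, Finset.Nat.antidiagonal_succ, Finset.sum_cons,
    Finset.sum_map, Hsum_splitFirst, Finset.mul_sum]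
  simp only [pow_zero, one_mul, Function.Embedding.coe_prodMap, Function.Embedding.coeFn_mk,
    Function.Embedding.refl_apply, Prod.map_fst, Prod.map_snd]
  congr 1
  apply Finset.sum_congr rfl
  intro p _
  rw [pow_succ]
  ring

lemma Hsum_succ_last (k m : ℕ) (x : Fin (k + 1) → ℂ) :
    Hsum (k + 1) (m + 1) x
      = Hsum k (m + 1) (x ∘ Fin.castSucc) + x (Fin.last k) * Hsum (k + 1) m x := by
  have hσ : ∀ (m' : ℕ), Hsum (k + 1) m' (x ∘ (finRotate (k + 1)).symm) = Hsum (k + 1) m' x :=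
    fun m' => Hsum_perm _ _ x _
  have h0 : (x ∘ (finRotate (k + 1)).symm) 0 = x (Fin.last k) := by
    simp only [Function.comp_apply]
    congr 1
  have hsucc : (x ∘ (finRotate (k + 1)).symm) ∘ Fin.succ = x ∘ Fin.castSucc := by
    funext i
    simp only [Function.comp_apply]
    congr 1
    rw [Equiv.symm_apply_eq, finRotate_succ_apply, Fin.coeSucc_eq_succ]
    try rfl
  calc Hsum (k + 1) (m + 1) x
      = Hsum (k + 1) (m + 1) (x ∘ (finRotate (k + 1)).symm) := (hσ _).symm
    _ = Hsum k (m + 1) ((x ∘ (finRotate (k + 1)).symm) ∘ Fin.succ)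
        + (x ∘ (finRotate (k + 1)).symm) 0
          * Hsum (k + 1) m (x ∘ (finRotate (k + 1)).symm) := Hsum_succ_first k m _
    _ = _ := by rw [h0, hsucc, hσ]

lemma Hsum_one (m : ℕ) (x : Fin 1 → ℂ) : Hsum 1 m x = x 0 ^ m := by
  simp [Hsum]

lemma divDiff_aux (M : ℕ) (hM : 1 ≤ M) :
    ∀ (n : ℕ) (z : Fin (n + 1) → ℂ), (∀ j, z j ≠ 0) → Function.Injective z →
      divDiff (fun w => w ^ (-(M : ℤ))) n z
        = (-1) ^ n * (∏ j, (z j)⁻¹) * Hsum (n + 1) (M - 1) (fun j => (z j)⁻¹) := by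
  intro n
  induction n with
  | zero =>
    intro z hz _
    show (z 0) ^ (-(M : ℤ)) = _
    have e1 : (∏ j : Fin (0 + 1), (z j)⁻¹) = (z 0)⁻¹ := Fin.prod_univ_one _
    have e2 : Hsum (0 + 1) (M - 1) (fun j : Fin (0 + 1) => (z j)⁻¹) = (z 0)⁻¹ ^ (M - 1) :=
      Hsum_one (M - 1) _
    rw [e1, e2, pow_zero, one_mul, zpow_neg, zpow_natCast, ← inv_pow]
    conv_lhs => rw [show M = M - 1 + 1 by omega]
    rw [pow_succ']
  | succ n ih =>
    intro z hz hinj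
    have hfront := ih (fun i : Fin (n + 1) => z i.castSucc) (fun j => hz _)
      (fun i j h => Fin.castSucc_injective _ (hinj h))
    have hback := ih (fun i : Fin (n + 1) => z i.succ) (fun j => hz _)
      (fun i j h => Fin.succ_injective _ (hinj h))
    rw [divDiff, hfront, hback]
    beta_reduce
    have ha : z 0 ≠ 0 := hz _
    have hb : z (Fin.last (n + 1)) ≠ 0 := hz _
    have h0l : (0 : Fin (n + 2)) ≠ Fin.last (n + 1) := by
      simp [Fin.ext_iff]
    have hab : z 0 - z (Fin.last (n + 1)) ≠ 0 := sub_ne_zero.mpr fun h => h0l (hinj h)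
    have hPne : (∏ i : Fin (n + 1), z i.castSucc) ≠ 0 :=
      Finset.prod_ne_zero_iff.mpr fun i _ => hz _
    have hP1 : (∏ j : Fin (n + 2), (z j)⁻¹)
        = (∏ i : Fin (n + 1), (z i.castSucc)⁻¹) * (z (Fin.last (n + 1)))⁻¹ :=
      Fin.prod_univ_castSucc fun j => (z j)⁻¹
    have hP2 : (∏ j : Fin (n + 2), (z j)⁻¹)
        = (z 0)⁻¹ * ∏ i : Fin (n + 1), (z i.succ)⁻¹ :=
      Fin.prod_univ_succ fun j => (z j)⁻¹
    have hPb : (∏ i : Fin (n + 1), (z i.succ)⁻¹)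
        = z 0 * ((∏ i : Fin (n + 1), (z i.castSucc)⁻¹) * (z (Fin.last (n + 1)))⁻¹) := by
      rw [← hP1, hP2, ← mul_assoc, mul_inv_cancel₀ ha, one_mul]
    have hPf : (∏ i : Fin (n + 1), (z i.castSucc)⁻¹)
        = (∏ i : Fin (n + 1), z i.castSucc)⁻¹ := by
      rw [← Finset.prod_inv_distrib]
    cases hm : M - 1 with
    | zero =>
      rw [hP1, hPb]
      simp only [Hsum_zero_right, mul_one, hPf]
      field_simp
      ring
    | succ m =>
      have e1 : ((fun j : Fin (n + 2) => (z j)⁻¹) ∘ Fin.castSucc)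
          = fun j : Fin (n + 1) => (z j.castSucc)⁻¹ := rfl
      have e2 : ((fun j : Fin (n + 2) => (z j)⁻¹) ∘ Fin.succ)
          = fun j : Fin (n + 1) => (z j.succ)⁻¹ := rfl
      have h1 := Hsum_succ_last (n + 1) m fun j : Fin (n + 2) => (z j)⁻¹
      rw [e1] at h1
      have h2 := Hsum_succ_first (n + 1) m fun j : Fin (n + 2) => (z j)⁻¹
      rw [e2] at h2
      have hF : Hsum (n + 1) (m + 1) (fun j : Fin (n + 1) => (z j.castSucc)⁻¹)
          = (Hsum (n + 1 + 1) (m + 1) fun j => (z j)⁻¹)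
            - (z (Fin.last (n + 1)))⁻¹ * Hsum (n + 1 + 1) m fun j => (z j)⁻¹ := by
        rw [h1]; ring
      have hB : Hsum (n + 1) (m + 1) (fun j : Fin (n + 1) => (z j.succ)⁻¹)
          = (Hsum (n + 1 + 1) (m + 1) fun j => (z j)⁻¹)
            - (z 0)⁻¹ * Hsum (n + 1 + 1) m fun j => (z j)⁻¹ := by
        rw [h2]; ring
      rw [hF, hB, hP1, hPb, hPf, div_eq_iff hab]
      linear_combination ((-1) ^ n * (∏ i : Fin (n + 1), z i.castSucc)⁻¹ *
        (z (Fin.last (n + 1)))⁻¹ * Hsum (n + 1 + 1) m fun j => (z j)⁻¹) * mul_inv_cancel₀ ha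
        - ((-1) ^ n * (∏ i : Fin (n + 1), z i.castSucc)⁻¹ *
            Hsum (n + 1 + 1) (m + 1) fun j => (z j)⁻¹) * mul_inv_cancel₀ hb

/-- For pairwise distinct nonzero `z₀,…,zₙ` and a negative integer `N`,
`[z₀,…,zₙ] id^N = ((-1)^n / (z₀ ⋯ zₙ)) ∑_{|α| = |N| - 1} z^{-α}`. -/
theorem divDiff_zpow_of_neg (n : ℕ) (N : ℤ) (hN : N < 0) (z : Fin (n + 1) → ℂ)
    (hz : ∀ j, z j ≠ 0) (hinj : Function.Injective z) :
    divDiff (fun w => w ^ N) n z =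
      ((-1) ^ n / ∏ j : Fin (n + 1), z j) *
        ∑ α ∈ Finset.Nat.antidiagonalTuple (n + 1) ((-N).toNat - 1),
          ∏ j : Fin (n + 1), (z j ^ α j)⁻¹ := by
  have htn : (((-N).toNat : ℤ)) = -N := Int.toNat_of_nonneg (by omega)
  have hM : 1 ≤ (-N).toNat := by omega
  have hN' : N = -(((-N).toNat : ℕ) : ℤ) := by omega
  conv_lhs => rw [hN']
  rw [divDiff_aux (-N).toNat hM n z hz hinj, div_eq_mul_inv, ← Finset.prod_inv_distrib]
  congr 1
  refine Finset.sum_congr rfl fun α _ => Finset.prod_congr rfl fun j _ => ?_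
  exact inv_pow _ _
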